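/- arXiv:2004.07152 — 2 statements merged into one kernel-verified Lean document; each statement's English description precedes it below -/
import Mathlib

section
/- Let \Omega \subset \mathbb{C}^N be open and convex, and let \rho: \Omega \to \mathbb{R} be a C^2 function whose real Hessian satisfies Hess\,\rho(x)(h,h) \ge 2c|h|^2 for all x \in \Omega and h \in \mathbb{R}^{2N}, for some constant c > 0. Define v(\zeta,z) = -\rho(\zeta) - \sum_{j=1}^N \frac{\partial\rho}{\partial\zeta_j}(\zeta)(z_j - \zeta_j). Then for all \zeta, z \in \Omega: 2\,\mathrm{Re}\, v(\zeta,z) \ge -\rho(z) - \rho(\zeta) + c\,|\zeta - z|^2. -/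
open Complex

noncomputable section

open Set in
private lemma strong_convex_aux {E : Type*} [NormedAddCommGroup E] [InnerProductSpace ℝ E]
    (Ω : Set E) (hΩo : IsOpen Ω) (hΩc : Convex ℝ Ω) (ρ : E → ℝ) (c : ℝ)
    (hρ : ContDiffOn ℝ 2 ρ Ω)
    (hHess : ∀ x ∈ Ω, ∀ h : E, fderiv ℝ (fun y => fderiv ℝ ρ y) x h h ≥ 2 * c * ‖h‖ ^ 2)
    (ζ z : E) (hζ : ζ ∈ Ω) (hz : z ∈ Ω) :
    ρ z ≥ ρ ζ + fderiv ℝ ρ ζ (z - ζ) + c * ‖z - ζ‖ ^ 2 := by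
  set h := z - ζ with hh
  set x : ℝ → E := fun t => ζ + t • h with hx
  have hxmem : ∀ t ∈ Icc (0:ℝ) 1, x t ∈ Ω := by
    intro t ht
    have := hΩc hζ hz (by linarith [ht.2] : (0:ℝ) ≤ 1 - t) ht.1 (by ring)
    convert this using 1
    simp only [hx, hh]
    module
  have hxd : ∀ t : ℝ, HasDerivAt x h t := fun t => by
    simpa [hx] using ((hasDerivAt_id t).smul_const h).const_add ζ
  have hCA : ∀ t ∈ Icc (0:ℝ) 1, ContDiffAt ℝ 2 ρ (x t) := fun t ht =>
    hρ.contDiffAt (hΩo.mem_nhds (hxmem t ht))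
  set φ : ℝ → ℝ := fun t => ρ (x t) with hφ
  set φ1 : ℝ → ℝ := fun t => fderiv ℝ ρ (x t) h with hφ1
  have hφ' : ∀ t ∈ Icc (0:ℝ) 1, HasDerivAt φ (φ1 t) t := by
    intro t ht
    exact (((hCA t ht).differentiableAt (by norm_num)).hasFDerivAt).comp_hasDerivAt t (hxd t)
  have hφ1' : ∀ t ∈ Icc (0:ℝ) 1,
      HasDerivAt φ1 (fderiv ℝ (fun y => fderiv ℝ ρ y) (x t) h h) t := by
    intro t ht
    have h2 : ContDiffAt ℝ 1 (fderiv ℝ ρ) (x t) := (hCA t ht).fderiv_right (by norm_num)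
    have h3 : HasDerivAt (fun s => fderiv ℝ ρ (x s))
        (fderiv ℝ (fun y => fderiv ℝ ρ y) (x t) h) t :=
      (h2.differentiableAt (by norm_num)).hasFDerivAt.comp_hasDerivAt t (hxd t)
    have := h3.clm_apply (hasDerivAt_const t h)
    simpa using this
  -- ψ1 = φ1 - 2c‖h‖² t is monotone on [0,1]
  set ψ1 : ℝ → ℝ := fun t => φ1 t - 2 * c * ‖h‖ ^ 2 * t with hψ1
  have hψ1' : ∀ t ∈ Icc (0:ℝ) 1,
      HasDerivAt ψ1 (fderiv ℝ (fun y => fderiv ℝ ρ y) (x t) h h - 2 * c * ‖h‖ ^ 2) t := by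
    intro t ht
    have := (hφ1' t ht).sub (((hasDerivAt_id t).const_mul (2 * c * ‖h‖ ^ 2)))
    simp only [id_eq, mul_one] at this
    exact this
  have hψ1mono : MonotoneOn ψ1 (Icc 0 1) := by
    apply monotoneOn_of_deriv_nonneg (convex_Icc 0 1)
    · exact fun t ht => ((hψ1' t ht).continuousAt).continuousWithinAt
    · intro t ht
      rw [interior_Icc] at ht
      exact ((hψ1' t (Ioo_subset_Icc_self ht)).differentiableAt).differentiableWithinAt
    · intro t ht
      rw [interior_Icc] at ht
      rw [(hψ1' t (Ioo_subset_Icc_self ht)).deriv]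
      have := hHess (x t) (hxmem t (Ioo_subset_Icc_self ht)) h
      linarith
  -- Φ = φ - φ1(0) t - c‖h‖² t² is monotone
  set Φ : ℝ → ℝ := fun t => φ t - φ1 0 * t - c * ‖h‖ ^ 2 * t ^ 2 with hΦ
  have hΦ' : ∀ t ∈ Icc (0:ℝ) 1, HasDerivAt Φ (φ1 t - φ1 0 - 2 * c * ‖h‖ ^ 2 * t) t := by
    intro t ht
    have h1 := ((hφ' t ht).sub (by simpa using (hasDerivAt_id t).const_mul (φ1 0) : HasDerivAt (fun s => φ1 0 * s) (φ1 0) t)).sub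
      (((hasDerivAt_pow 2 t)).const_mul (c * ‖h‖ ^ 2))
    refine h1.congr_deriv ?_
    simp only [Nat.reduceSub, pow_one, Nat.cast_ofNat]
    ring
  have hΦmono : MonotoneOn Φ (Icc 0 1) := by
    apply monotoneOn_of_deriv_nonneg (convex_Icc 0 1)
    · exact fun t ht => ((hΦ' t ht).continuousAt).continuousWithinAt
    · intro t ht
      rw [interior_Icc] at ht
      exact ((hΦ' t (Ioo_subset_Icc_self ht)).differentiableAt).differentiableWithinAt
    · intro t ht
      rw [interior_Icc] at ht
      rw [(hΦ' t (Ioo_subset_Icc_self ht)).deriv]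
      have := hψ1mono (left_mem_Icc.2 one_pos.le) (Ioo_subset_Icc_self ht) ht.1.le
      simp only [hψ1] at this
      linarith
  have key := hΦmono (left_mem_Icc.2 one_pos.le) (right_mem_Icc.2 one_pos.le) one_pos.le
  simp only [hΦ, hφ, hφ1, hx] at key
  simp only [zero_smul, add_zero, one_smul, mul_zero, mul_one, one_pow] at key
  have hx1 : ζ + h = z := by simp [hh]
  rw [hx1] at key
  linarith

/-- The holomorphic Wirtinger derivative `∂ρ/∂ζ_j = ½(∂ρ/∂x_j - i ∂ρ/∂y_j)` of a real-valued
function on `ℂ^N`, expressed via the real Fréchet derivative. -/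
def wirtinger {N : ℕ} (ρ : EuclideanSpace ℂ (Fin N) → ℝ) (j : Fin N)
    (ζ : EuclideanSpace ℂ (Fin N)) : ℂ :=
  (1 / 2 : ℂ) * ((fderiv ℝ ρ ζ (EuclideanSpace.single j 1) : ℂ)
    - Complex.I * (fderiv ℝ ρ ζ (EuclideanSpace.single j Complex.I) : ℂ))

/-- If `ρ` is `C²` on a convex open set `Ω ⊂ ℂ^N` with real Hessian `≥ 2c·Id`, and
`v(ζ,z) = -ρ(ζ) - ∑_j ∂ρ/∂ζ_j(ζ)(z_j - ζ_j)`, then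
`2 Re v(ζ,z) ≥ -ρ(z) - ρ(ζ) + c|ζ - z|²` for all `ζ, z ∈ Ω`. -/
theorem stmt2 (N : ℕ) (Ω : Set (EuclideanSpace ℂ (Fin N))) (hΩo : IsOpen Ω)
    (hΩc : Convex ℝ Ω) (ρ : EuclideanSpace ℂ (Fin N) → ℝ) (c : ℝ) (hc : 0 < c)
    (hρ : ContDiffOn ℝ 2 ρ Ω)
    (hHess : ∀ x ∈ Ω, ∀ h : EuclideanSpace ℂ (Fin N),
      fderiv ℝ (fun y => fderiv ℝ ρ y) x h h ≥ 2 * c * ‖h‖ ^ 2)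
    (ζ z : EuclideanSpace ℂ (Fin N)) (hζ : ζ ∈ Ω) (hz : z ∈ Ω) :
    2 * (-(ρ ζ : ℂ) - ∑ j, wirtinger ρ j ζ * (z j - ζ j)).re
      ≥ -ρ z - ρ ζ + c * ‖ζ - z‖ ^ 2 := by
  have hsc := strong_convex_aux Ω hΩo hΩc ρ c hρ hHess ζ z hζ hz
  set D := fderiv ℝ ρ ζ with hD
  set h : EuclideanSpace ℂ (Fin N) := z - ζ with hh
  -- decompose h
  have hdecomp : h = ∑ j, ((h j).re • EuclideanSpace.single j (1:ℂ)
      + (h j).im • EuclideanSpace.single j Complex.I) := by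
    ext j
    rw [WithLp.ofLp_sum, Finset.sum_apply, Finset.sum_eq_single j]
    · simp [EuclideanSpace.single_apply, Complex.ext_iff, Complex.real_smul,
        Complex.mul_re, Complex.mul_im]
    · intro b _ hb
      simp [EuclideanSpace.single_apply, (Ne.symm hb : j ≠ b)]
    · intro hj; exact absurd (Finset.mem_univ j) hj
  have hDh : D h = ∑ j, ((h j).re * D (EuclideanSpace.single j 1)
      + (h j).im * D (EuclideanSpace.single j Complex.I)) := by
    conv_lhs => rw [hdecomp]
    rw [map_sum]
    congr 1; ext j
    rw [map_add, map_smul, map_smul]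
    simp
  -- Re of each wirtinger term
  have hre : ∀ j, (wirtinger ρ j ζ * (z j - ζ j)).re
      = (1/2) * ((h j).re * D (EuclideanSpace.single j 1)
        + (h j).im * D (EuclideanSpace.single j Complex.I)) := by
    intro j
    have hj : z j - ζ j = h j := by simp [hh]
    rw [hj]
    simp only [wirtinger, ← hD]
    simp [Complex.mul_re, Complex.mul_im, Complex.sub_re, Complex.sub_im,
      Complex.ofReal_re, Complex.ofReal_im, Complex.I_re, Complex.I_im]
    ring
  have hsum : (∑ j, wirtinger ρ j ζ * (z j - ζ j)).re = (1/2) * D h := by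
    rw [Complex.re_sum, hDh, Finset.mul_sum]
    exact Finset.sum_congr rfl fun j _ => hre j
  have hnorm : ‖ζ - z‖ = ‖h‖ := by rw [hh, norm_sub_rev]
  have : (-(ρ ζ : ℂ) - ∑ j, wirtinger ρ j ζ * (z j - ζ j)).re = -ρ ζ - (1/2) * D h := by
    simp [Complex.sub_re, hsum]
  rw [this, hnorm]
  linarith

end
end

section
/- Let N \ge 1 be an integer, s > -1 and b > 0 real numbers. There is a constant C = C(N,s,b) such that for all y = (y_1,\ldots,y_{2N}) \in \mathbb{R}^{2N} with y_1 > 0: \int_{\{x \in \mathbb{R}^{2N}:\ |x| < 1,\ x_1 > 0\}} \frac{x_1^s \; dx_1\cdots dx_{2N}}{\big(x_1 + y_1 + |x_2 - y_2| + \sum_{j=3}^{2N}(x_j - y_j)^2\big)^{N+1+s+b}} \;\le\; \frac{C}{y_1^{\,b}}. -/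
open MeasureTheory
open scoped ENNReal

private lemma dyadic_exists {r : ℝ} (hr : 1 ≤ r) :
    ∃ k : ℕ, (2:ℝ) ^ (k:ℝ) ≤ r ∧ r < (2:ℝ) ^ ((k:ℝ)+1) := by
  have hr0 : 0 < r := lt_of_lt_of_le one_pos hr
  have hlog : 0 ≤ Real.logb 2 r := Real.logb_nonneg one_lt_two hr
  refine ⟨⌊Real.logb 2 r⌋₊, ?_, ?_⟩
  · calc (2:ℝ) ^ ((⌊Real.logb 2 r⌋₊ : ℝ)) ≤ 2 ^ Real.logb 2 r :=
        Real.rpow_le_rpow_of_exponent_le one_le_two (Nat.floor_le hlog)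
    _ = r := Real.rpow_logb two_pos (by norm_num) hr0
  · calc r = 2 ^ Real.logb 2 r := (Real.rpow_logb two_pos (by norm_num) hr0).symm
    _ < 2 ^ ((⌊Real.logb 2 r⌋₊ : ℝ) + 1) :=
        Real.rpow_lt_rpow_of_exponent_lt one_lt_two (Nat.lt_floor_add_one _)

private lemma cv_ident (N : ℕ) (hN : 1 ≤ N) (s b y1 : ℝ) (hy : 0 < y1) (k l : ℕ) :
    ((2:ℝ)^|s| * (y1 * (2:ℝ)^((k:ℝ)+1-(l:ℝ)))^s / ((2:ℝ)^(k:ℝ) * y1)^((N:ℝ)+1+s+b))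
      * ((y1 * (2:ℝ)^((k:ℝ)+1-(l:ℝ))) * (2 * ((2:ℝ)^((k:ℝ)+1) * y1))
          * (2 * Real.sqrt ((2:ℝ)^((k:ℝ)+1) * y1))^(2*N-2))
    = (2:ℝ)^(|s| + s + 3*(N:ℝ)) * ((2:ℝ)^(-b))^k * ((2:ℝ)^(-(1+s)))^l * y1^(-b) := by
  have h2 : (0:ℝ) < 2 := two_pos
  have hcast : ((2*N - 2 : ℕ) : ℝ) = 2*(N:ℝ) - 2 := by
    push_cast [Nat.cast_sub (by omega : 2 ≤ 2*N)]; ring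
  rw [show (2:ℝ) = Real.exp (Real.log 2) from (Real.exp_log h2).symm,
      show y1 = Real.exp (Real.log y1) from (Real.exp_log hy).symm]
  simp only [Real.sqrt_eq_rpow, ← Real.exp_mul, ← Real.exp_add, ← Real.exp_sub,
    ← Real.exp_nat_mul, Real.exp_eq_exp]
  rw [hcast]; ring

set_option maxHeartbeats 2000000 in
/-- The elementary Koranyi-ball kernel estimate: for `N ≥ 1`, `s > -1`, `b > 0`, there is
`C` such that for all `y ∈ ℝ^{2N}` with `y₁ > 0`,
`∫_{|x|<1, x₁>0} x₁^s / (x₁ + y₁ + |x₂-y₂| + ∑_{j≥3}(x_j-y_j)²)^{N+1+s+b} dx ≤ C / y₁^b`. -/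
theorem stmt15 (N : ℕ) (hN : 1 ≤ N) (s b : ℝ) (hs : s > -1) (hb : 0 < b) :
    ∃ C : ℝ, 0 < C ∧
      ∀ y : EuclideanSpace ℝ (Fin (2 * N)), 0 < y ⟨0, by omega⟩ →
      (∫⁻ x in {x : EuclideanSpace ℝ (Fin (2 * N)) | ‖x‖ < 1 ∧ 0 < x ⟨0, by omega⟩},
          ENNReal.ofReal ((x ⟨0, by omega⟩) ^ s /
            (x ⟨0, by omega⟩ + y ⟨0, by omega⟩ + |x ⟨1, by omega⟩ - y ⟨1, by omega⟩|
              + ∑ j ∈ Finset.univ.filter (fun j : Fin (2 * N) => 2 ≤ (j : ℕ)),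
                  (x j - y j) ^ 2) ^ ((N : ℝ) + 1 + s + b)))
        ≤ ENNReal.ofReal (C / (y ⟨0, by omega⟩) ^ b) := by
  classical
  have h2 : (0:ℝ) < 2 := two_pos
  have hNR : (1:ℝ) ≤ N := by exact_mod_cast hN
  have hs1 : (0:ℝ) < 1 + s := by linarith
  set z₀ : Fin (2*N) := ⟨0, by omega⟩ with hz₀def
  set z₁ : Fin (2*N) := ⟨1, by omega⟩ with hz₁def
  set R : Finset (Fin (2*N)) := Finset.univ.filter (fun j : Fin (2*N) => 2 ≤ (j:ℕ)) with hRdef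
  set M : ℝ := (N:ℝ) + 1 + s + b with hMdef
  have hM0 : (0:ℝ) < M := by rw [hMdef]; linarith
  set q1 : ℝ≥0∞ := ENNReal.ofReal ((2:ℝ)^(-b)) with hq1def
  set q2 : ℝ≥0∞ := ENNReal.ofReal ((2:ℝ)^(-(1+s))) with hq2def
  have hq1lt : q1 < 1 := by
    rw [hq1def, ← ENNReal.ofReal_one]
    exact ENNReal.ofReal_lt_ofReal_iff_of_nonneg (by positivity) |>.mpr
      (Real.rpow_lt_one_of_one_lt_of_neg one_lt_two (by linarith))
  have hq2lt : q2 < 1 := by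
    rw [hq2def, ← ENNReal.ofReal_one]
    exact ENNReal.ofReal_lt_ofReal_iff_of_nonneg (by positivity) |>.mpr
      (Real.rpow_lt_one_of_one_lt_of_neg one_lt_two (by linarith))
  set A0 : ℝ≥0∞ := ENNReal.ofReal ((2:ℝ)^(|s| + s + 3*(N:ℝ))) with hA0def
  set Z : ℝ≥0∞ := A0 * ((1 - q1)⁻¹ * (1 - q2)⁻¹) with hZdef
  have hZtop : Z ≠ ⊤ := by
    rw [hZdef]
    refine ENNReal.mul_ne_top ENNReal.ofReal_ne_top (ENNReal.mul_ne_top ?_ ?_) <;>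
    · rw [ENNReal.inv_ne_top]
      simp only [ne_eq, tsub_eq_zero_iff_le, not_le]
      first | exact hq1lt | exact hq2lt
  refine ⟨Z.toReal + 1, by positivity, ?_⟩
  intro y hy1
  set y1 : ℝ := y z₀ with hy1def
  -- main objects
  set D : EuclideanSpace ℝ (Fin (2*N)) → ℝ :=
    fun x => x z₀ + y1 + |x z₁ - y z₁| + ∑ j ∈ R, (x j - y j)^2 with hDdef
  set T : ℕ → ℝ := fun k => (2:ℝ)^((k:ℝ)+1) * y1 with hTdef
  set t : ℕ → ℕ → ℝ := fun k l => T k / (2:ℝ)^(l:ℝ) with htdef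
  have hTpos : ∀ k, 0 < T k := fun k => by
    rw [hTdef]; positivity
  have htpos : ∀ k l, 0 < t k l := fun k l => by
    rw [htdef]; exact div_pos (hTpos k) (by positivity)
  set shell : ℕ × ℕ → Set (EuclideanSpace ℝ (Fin (2*N))) :=
    fun p => {x | (2:ℝ)^(p.1:ℝ) * y1 ≤ D x ∧ D x < T p.1 ∧
      T p.1 / (2:ℝ)^((p.2:ℝ)+1) < x z₀ ∧ x z₀ ≤ t p.1 p.2} with hshelldef
  have hQ0 : ∀ x : EuclideanSpace ℝ (Fin (2*N)), 0 ≤ ∑ j ∈ R, (x j - y j)^2 :=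
    fun x => Finset.sum_nonneg fun j _ => sq_nonneg _
  -- coordinate measurability
  have hcoord : ∀ j : Fin (2*N), Measurable fun x : EuclideanSpace ℝ (Fin (2*N)) => x j :=
    fun j => (measurable_pi_apply j).comp ((MeasurableEquiv.toLp 2 (Fin (2*N) → ℝ)).symm).measurable
  have hDmeas : Measurable D := by
    rw [hDdef]
    refine (((hcoord z₀).add measurable_const).add ?_).add ?_
    · exact ((hcoord z₁).sub measurable_const).abs
    · exact Finset.measurable_sum _ fun j _ => ((hcoord j).sub measurable_const).pow measurable_const
  have hshellmeas : ∀ p, MeasurableSet (shell p) := by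
    intro p
    rw [hshelldef]
    simp only [Set.setOf_and]
    exact (measurableSet_le measurable_const hDmeas).inter
      ((measurableSet_lt hDmeas measurable_const).inter
        ((measurableSet_lt measurable_const (hcoord z₀)).inter
          (measurableSet_le (hcoord z₀) measurable_const)))

  -- covering
  have hcover : {x : EuclideanSpace ℝ (Fin (2*N)) | ‖x‖ < 1 ∧ 0 < x z₀} ⊆
      ⋃ p : ℕ × ℕ, shell p := by
    rintro x ⟨-, hx0⟩
    have habs : 0 ≤ |x z₁ - y z₁| := abs_nonneg _
    have hQ := hQ0 x
    have hy1' : (0:ℝ) < y1 := hy1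
    have hyD : y1 ≤ D x := by
      rw [hDdef]; dsimp only; linarith
    have hxD : x z₀ < D x := by
      rw [hDdef]; dsimp only; linarith
    obtain ⟨k, hk1, hk2⟩ := dyadic_exists ((le_div_iff₀ hy1').2 (by linarith) : 1 ≤ D x / y1)
    have hkD1 : (2:ℝ)^(k:ℝ) * y1 ≤ D x := (le_div_iff₀ hy1').1 hk1
    have hkD2 : D x < T k := by rw [hTdef]; exact (div_lt_iff₀ hy1').1 hk2
    have hxT : x z₀ < T k := lt_trans hxD hkD2
    obtain ⟨l, hl1, hl2⟩ := dyadic_exists ((le_div_iff₀ hx0).2 (by linarith) : 1 ≤ T k / x z₀)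
    refine Set.mem_iUnion.2 ⟨(k, l), hkD1, hkD2, ?_, ?_⟩
    · have h := (div_lt_iff₀ hx0).1 hl2
      rw [div_lt_iff₀ (by positivity : (0:ℝ) < (2:ℝ)^((l:ℝ)+1))]
      nlinarith [mul_comm (x z₀) ((2:ℝ)^((l:ℝ)+1))]
    · have h := (le_div_iff₀ hx0).1 hl1
      rw [htdef]; dsimp only
      rw [le_div_iff₀ (by positivity : (0:ℝ) < (2:ℝ)^(l:ℝ))]
      nlinarith [mul_comm (x z₀) ((2:ℝ)^(l:ℝ))]
  -- boxes
  set Ibx : ℕ × ℕ → Fin (2*N) → Set ℝ := fun p j =>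
    if j = z₀ then Set.Ioc 0 (t p.1 p.2)
    else if j = z₁ then Set.Icc (y z₁ - T p.1) (y z₁ + T p.1)
    else Set.Icc (y j - Real.sqrt (T p.1)) (y j + Real.sqrt (T p.1)) with hIdef
  set box : ℕ × ℕ → Set (EuclideanSpace ℝ (Fin (2*N))) := fun p =>
    ((MeasurableEquiv.toLp 2 (Fin (2*N) → ℝ)).symm) ⁻¹' (Set.univ.pi (Ibx p)) with hboxdef
  have hz₁z₀ : z₁ ≠ z₀ := by
    rw [hz₀def, hz₁def]; simp [Fin.ext_iff]
  have hsub : ∀ p, shell p ⊆ box p := by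
    rintro ⟨k, l⟩ x hx
    obtain ⟨hD1, hD2, hx1, hx2⟩ := hx
    have hTk := hTpos k
    have hx0 : 0 < x z₀ := lt_trans (by positivity) hx1
    have habs : 0 ≤ |x z₁ - y z₁| := abs_nonneg _
    have hQ := hQ0 x
    have hy1' : (0:ℝ) < y1 := hy1
    have hDx : D x = x z₀ + y1 + |x z₁ - y z₁| + ∑ j ∈ R, (x j - y j)^2 := by
      rw [hDdef]
    intro j _
    show ((MeasurableEquiv.toLp 2 (Fin (2*N) → ℝ)).symm) x j ∈ Ibx (k, l) j
    have hexj : ((MeasurableEquiv.toLp 2 (Fin (2*N) → ℝ)).symm) x j = x j := rfl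
    rw [hexj, hIdef]
    dsimp only
    by_cases hj0 : j = z₀
    · rw [if_pos hj0, hj0]
      exact ⟨hx0, hx2⟩
    · rw [if_neg hj0]
      by_cases hj1 : j = z₁
      · rw [if_pos hj1, hj1]
        have habsD : |x z₁ - y z₁| < T k := by
          linarith [hDx, hD2, hx0, hQ, hy1']
        have := abs_lt.1 habsD
        constructor <;> linarith
      · rw [if_neg hj1]
        have hjR : j ∈ R := by
          rw [hRdef]
          simp only [Finset.mem_filter, Finset.mem_univ, true_and]
          rw [hz₀def] at hj0; rw [hz₁def] at hj1
          have h0 : (j:ℕ) ≠ 0 := fun h => hj0 (Fin.ext h)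
          have h1 : (j:ℕ) ≠ 1 := fun h => hj1 (Fin.ext h)
          omega
        have hsq : (x j - y j)^2 ≤ ∑ i ∈ R, (x i - y i)^2 :=
          Finset.single_le_sum (fun i _ => sq_nonneg (x i - y i)) hjR
        have hsqT : (x j - y j)^2 ≤ T k := by
          linarith [hsq, hDx, hD2, hx0, hy1', habs]
        have habsj : |x j - y j| ≤ Real.sqrt (T k) := by
          rw [← Real.sqrt_sq_eq_abs]
          exact Real.sqrt_le_sqrt hsqT
        have := abs_le.1 habsj
        constructor <;> linarith
  -- volumes of boxes
  have hRerase : R = (Finset.univ.erase z₀).erase z₁ := by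
    ext j
    rw [hRdef, hz₀def, hz₁def]
    simp only [Finset.mem_filter, Finset.mem_univ, true_and, Finset.mem_erase, and_true,
      ne_eq, Fin.ext_iff]
    omega

  have hz₁mem : z₁ ∈ Finset.univ.erase z₀ := Finset.mem_erase.2 ⟨hz₁z₀, Finset.mem_univ _⟩
  have hcard : R.card = 2*N - 2 := by
    rw [hRerase, Finset.card_erase_of_mem hz₁mem, Finset.card_erase_of_mem (Finset.mem_univ z₀),
      Finset.card_univ, Fintype.card_fin]
    omega
  have hprodsplit : ∀ g : Fin (2*N) → ℝ≥0∞,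
      ∏ j, g j = g z₀ * (g z₁ * ∏ j ∈ R, g j) := by
    intro g
    rw [hRerase, Finset.mul_prod_erase _ _ hz₁mem, Finset.mul_prod_erase _ _ (Finset.mem_univ z₀)]
  have hvol : ∀ p : ℕ × ℕ, volume (box p) =
      ENNReal.ofReal (t p.1 p.2 * (2 * T p.1) * (2 * Real.sqrt (T p.1))^(2*N-2)) := by
    intro p
    have hIm : ∀ j, MeasurableSet (Ibx p j) := by
      intro j
      rw [hIdef]; dsimp only
      split_ifs <;> first | exact measurableSet_Ioc | exact measurableSet_Icc
    have h1 : volume (box p) = Measure.pi (fun _ => volume) (Set.univ.pi (Ibx p)) := by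
      rw [hboxdef]
      exact (EuclideanSpace.volume_preserving_symm_measurableEquiv_toLp (Fin (2*N))).measure_preimage
        ((MeasurableSet.univ_pi hIm).nullMeasurableSet)
    rw [h1, Measure.pi_pi, hprodsplit (fun j => volume (Ibx p j))]
    have e0 : Ibx p z₀ = Set.Ioc 0 (t p.1 p.2) := by
      rw [hIdef]; dsimp only; rw [if_pos rfl]
    have e1 : Ibx p z₁ = Set.Icc (y z₁ - T p.1) (y z₁ + T p.1) := by
      rw [hIdef]; dsimp only; rw [if_neg hz₁z₀, if_pos rfl]
    have eR : ∀ j ∈ R, volume (Ibx p j) = ENNReal.ofReal (2 * Real.sqrt (T p.1)) := by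
      intro j hj
      rw [hRerase] at hj
      obtain ⟨hj1, hj0, -⟩ := Finset.mem_erase.1 hj |>.imp id (fun h => Finset.mem_erase.1 h)
      rw [hIdef]; dsimp only
      rw [if_neg hj0, if_neg hj1, Real.volume_Icc]
      congr 1; ring
    rw [e0, e1, Real.volume_Ioc, Real.volume_Icc, Finset.prod_congr rfl eR,
      Finset.prod_const, hcard, sub_zero,
      show y z₁ + T p.1 - (y z₁ - T p.1) = 2 * T p.1 from by ring,
      ← ENNReal.ofReal_pow (mul_nonneg two_pos.le (Real.sqrt_nonneg _)),
      ← ENNReal.ofReal_mul (mul_nonneg two_pos.le (hTpos p.1).le),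
      ← ENNReal.ofReal_mul (htpos p.1 p.2).le]
    congr 1
    ring

  -- per-shell estimate
  have hterm : ∀ p : ℕ × ℕ,
      (∫⁻ x in shell p, ENNReal.ofReal ((x z₀)^s / (D x)^M)) ≤
        A0 * ENNReal.ofReal (y1^(-b)) * (q1^p.1 * q2^p.2) := by
    rintro ⟨k, l⟩
    have hy1' : (0:ℝ) < y1 := hy1
    have htp := htpos k l
    have hTp := hTpos k
    have hdp : (0:ℝ) < (2:ℝ)^(k:ℝ) * y1 := by positivity
    set c : ℝ := (2:ℝ)^|s| * (t k l)^s / ((2:ℝ)^(k:ℝ) * y1)^M with hcdef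
    have hnum0 : 0 ≤ (2:ℝ)^|s| * (t k l)^s :=
      mul_nonneg (Real.rpow_nonneg two_pos.le _) (Real.rpow_nonneg htp.le s)
    have hc0 : 0 ≤ c := by
      rw [hcdef]
      exact div_nonneg hnum0 (Real.rpow_nonneg hdp.le M)
    have hptw : ∀ x ∈ shell (k, l),
        ENNReal.ofReal ((x z₀)^s / (D x)^M) ≤ ENNReal.ofReal c := by
      intro x hx
      obtain ⟨hD1, hD2, hx1, hx2⟩ := hx
      have hx0 : 0 < x z₀ :=
        lt_trans (div_pos hTp (Real.rpow_pos_of_pos two_pos _)) hx1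
      have hDx0 : 0 < D x := lt_of_lt_of_le hdp hD1
      apply ENNReal.ofReal_le_ofReal
      have hdenom : ((2:ℝ)^(k:ℝ) * y1)^M ≤ (D x)^M :=
        Real.rpow_le_rpow hdp.le hD1 hM0.le
      have hnum : (x z₀)^s ≤ (2:ℝ)^|s| * (t k l)^s := by
        rcases le_or_gt 0 s with hs0 | hs0
        · have h1 : (x z₀)^s ≤ (t k l)^s := Real.rpow_le_rpow hx0.le hx2 hs0
          have h2 : (1:ℝ) ≤ (2:ℝ)^|s| := Real.one_le_rpow one_le_two (abs_nonneg s)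
          exact le_trans h1 (le_mul_of_one_le_left (Real.rpow_nonneg htp.le s) h2)
        · have hhalf : T k / (2:ℝ)^((l:ℝ)+1) = t k l / 2 := by
            rw [htdef]; dsimp only
            rw [Real.rpow_add h2, Real.rpow_one, ← div_div]
          rw [hhalf] at hx1
          have h1 : (x z₀)^s ≤ (t k l / 2)^s :=
            Real.rpow_le_rpow_of_nonpos (by linarith) hx1.le hs0.le
          have h2 : (t k l / 2)^s = (2:ℝ)^|s| * (t k l)^s := by
            rw [abs_of_neg hs0, Real.div_rpow htp.le two_pos.le, Real.rpow_neg two_pos.le]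
            field_simp
          rw [h2] at h1; exact h1
      calc (x z₀)^s / (D x)^M ≤ ((2:ℝ)^|s| * (t k l)^s) / ((2:ℝ)^(k:ℝ) * y1)^M :=
            div_le_div₀ hnum0 hnum (Real.rpow_pos_of_pos hdp M) hdenom
        _ = c := rfl
    calc (∫⁻ x in shell (k,l), ENNReal.ofReal ((x z₀)^s / (D x)^M))
        ≤ ∫⁻ _ in shell (k,l), ENNReal.ofReal c :=
          setLIntegral_mono_ae' (hshellmeas (k,l)) (Filter.Eventually.of_forall hptw)
      _ = ENNReal.ofReal c * volume (shell (k,l)) := setLIntegral_const _ _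
      _ ≤ ENNReal.ofReal c * volume (box (k,l)) := mul_le_mul_right (measure_mono (hsub _)) _
      _ = ENNReal.ofReal c * ENNReal.ofReal
            (t k l * (2 * T k) * (2 * Real.sqrt (T k))^(2*N-2)) := by rw [hvol (k,l)]
      _ = ENNReal.ofReal (c * (t k l * (2 * T k) * (2 * Real.sqrt (T k))^(2*N-2))) :=
          (ENNReal.ofReal_mul hc0).symm
      _ = A0 * ENNReal.ofReal (y1^(-b)) * (q1^k * q2^l) := by
          have htt : t k l = y1 * (2:ℝ)^((k:ℝ)+1-(l:ℝ)) := by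
            rw [htdef, hTdef]; dsimp only
            rw [Real.rpow_sub h2]; ring
          rw [hcdef, hMdef, htt, hTdef]
          dsimp only
          rw [cv_ident N hN s b y1 hy1' k l, hA0def, hq1def, hq2def]
          rw [ENNReal.ofReal_mul (by positivity), ENNReal.ofReal_mul (by positivity),
            ENNReal.ofReal_mul (by positivity), ENNReal.ofReal_pow (by positivity),
            ENNReal.ofReal_pow (by positivity)]
          ring
  -- final chain
  have hy1' : (0:ℝ) < y1 := hy1
  calc (∫⁻ x in {x : EuclideanSpace ℝ (Fin (2*N)) | ‖x‖ < 1 ∧ 0 < x z₀},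
        ENNReal.ofReal ((x z₀)^s / (D x)^M))
      ≤ ∫⁻ x in ⋃ p : ℕ × ℕ, shell p, ENNReal.ofReal ((x z₀)^s / (D x)^M) :=
        lintegral_mono_set hcover
    _ ≤ ∑' p : ℕ × ℕ, ∫⁻ x in shell p, ENNReal.ofReal ((x z₀)^s / (D x)^M) :=
        lintegral_iUnion_le _ _
    _ ≤ ∑' p : ℕ × ℕ, A0 * ENNReal.ofReal (y1^(-b)) * (q1^p.1 * q2^p.2) :=
        ENNReal.tsum_le_tsum hterm
    _ = Z * ENNReal.ofReal (y1^(-b)) := by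
        rw [ENNReal.tsum_mul_left, ENNReal.tsum_prod']
        simp only [ENNReal.tsum_mul_left, ENNReal.tsum_mul_right]
        rw [ENNReal.tsum_geometric, ENNReal.tsum_geometric, hZdef]
        ring
    _ ≤ ENNReal.ofReal ((Z.toReal + 1) / y1^b) := by
        rw [div_eq_mul_inv, ← Real.rpow_neg hy1'.le, ENNReal.ofReal_mul (by positivity)]
        refine mul_le_mul_left ?_ _
        exact (ENNReal.ofReal_toReal hZtop).symm.le.trans
          (ENNReal.ofReal_le_ofReal (by linarith))
end
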